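/- The inradius diameter of the Kuhn simplex T̂ ⊂ ℝ^n satisfies 1/r(T̂) = 1 + (n−1)/√2. -/

import Mathlib

open Metric Set

/-- Diameter of the largest closed ball inscribed in `S`. -/
noncomputable def inDiam {n : ℕ} (S : Set (EuclideanSpace ℝ (Fin n))) : ℝ :=
  2 * sSup {r : ℝ | 0 ≤ r ∧ ∃ c, Metric.closedBall c r ⊆ S}

/-- Diameter of the smallest closed ball containing `S`. -/
noncomputable def circumDiam {n : ℕ} (S : Set (EuclideanSpace ℝ (Fin n))) : ℝ :=
  2 * sInf {r : ℝ | 0 ≤ r ∧ ∃ c, S ⊆ Metric.closedBall c r}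

/-- Shape regularity `γ(S) = R(S)/r(S)`. -/
noncomputable def shapeReg {n : ℕ} (S : Set (EuclideanSpace ℝ (Fin n))) : ℝ :=
  circumDiam S / inDiam S

/-- Height of the simplex with vertices `v` over the hyperface opposite vertex `i`. -/
noncomputable def simplexHeight {n : ℕ} (v : Fin (n + 1) → EuclideanSpace ℝ (Fin n))
    (i : Fin (n + 1)) : ℝ :=
  sSup ((fun x => Metric.infDist x (convexHull ℝ (v '' {i}ᶜ))) ''
    convexHull ℝ (Set.range v))

/-- Minimal height of the simplex with vertices `v`. -/
noncomputable def minHeight {n : ℕ} (v : Fin (n + 1) → EuclideanSpace ℝ (Fin n)) : ℝ :=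
  ⨅ i, simplexHeight v i

/-- The `k`-th vertex of the Kuhn simplex, `v_k = e_1 + ⋯ + e_k`. -/
noncomputable def kuhnVertex (n : ℕ) (k : Fin (n + 1)) : EuclideanSpace ℝ (Fin n) :=
  (WithLp.equiv 2 (Fin n → ℝ)).symm fun i => if (i : ℕ) < (k : ℕ) then 1 else 0

/-- The Kuhn simplex `conv{0, e₁, e₁+e₂, …, e₁+⋯+e_n} ⊂ ℝⁿ`. -/
noncomputable def kuhnSimplex (n : ℕ) : Set (EuclideanSpace ℝ (Fin n)) :=
  convexHull ℝ (Set.range (kuhnVertex n))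

lemma kuhnVertex_apply (n : ℕ) (k : Fin (n+1)) (i : Fin n) :
    kuhnVertex n k i = if (i : ℕ) < (k : ℕ) then 1 else 0 := rfl

def Kset (n : ℕ) : Set (EuclideanSpace ℝ (Fin n)) :=
  {x | (∀ i : Fin n, 0 ≤ x i ∧ x i ≤ 1) ∧ ∀ i j : Fin n, i ≤ j → x j ≤ x i}

lemma kuhn_subset_Kset (n : ℕ) : kuhnSimplex n ⊆ Kset n := by
  apply convexHull_min
  · rintro _ ⟨k, rfl⟩
    refine ⟨fun i => ?_, fun i j hij => ?_⟩
    · rw [kuhnVertex_apply]; split <;> norm_num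
    · have hij' : (i : ℕ) ≤ (j : ℕ) := hij
      rw [kuhnVertex_apply, kuhnVertex_apply]
      split_ifs <;> first | omega | norm_num
  · intro x hx y hy a b ha hb hab
    have hxy : ∀ i : Fin n, (a • x + b • y) i = a * x i + b * y i := fun i => rfl
    refine ⟨fun i => ⟨?_, ?_⟩, fun i j hij => ?_⟩
    · rw [hxy]; nlinarith [(hx.1 i).1, (hy.1 i).1]
    · rw [hxy]; nlinarith [(hx.1 i).2, (hy.1 i).2]
    · rw [hxy, hxy]; nlinarith [hx.2 i j hij, hy.2 i j hij]

lemma Kset_subset_kuhn (n : ℕ) : Kset n ⊆ kuhnSimplex n := by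
  intro x hx
  obtain ⟨hx1, hx2⟩ := hx
  set Y : ℕ → ℝ := fun j => if j = 0 then 1 else if h : j - 1 < n then x ⟨j - 1, h⟩ else 0 with hY
  have hYanti : ∀ j : ℕ, Y (j + 1) ≤ Y j := by
    intro j
    match j with
    | 0 =>
      show (if (1:ℕ) = 0 then (1:ℝ) else if h : 0 < n then x ⟨0, h⟩ else 0) ≤ _
      simp only [hY]
      norm_num
      split_ifs with h
      · exact (hx1 _).2
      · norm_num
    | Nat.succ j =>
      show (if j + 2 = 0 then (1:ℝ) else if h : j + 1 < n then x ⟨j+1, h⟩ else 0)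
          ≤ (if j + 1 = 0 then (1:ℝ) else if h : j < n then x ⟨j, h⟩ else 0)
      norm_num
      split_ifs with h1 h2 h2
      · exact hx2 ⟨j, h2⟩ ⟨j+1, h1⟩ (by simp [Fin.le_def])
      · omega
      · exact (hx1 _).1
      · exact le_refl _
  have hYtop : Y (n + 1) = 0 := by simp [hY]
  have hY0 : Y 0 = 1 := by simp [hY]
  have hYi : ∀ i : Fin n, Y (i + 1) = x i := by
    intro i
    simp [hY]
  have key : ∀ i : Fin n,
      (∑ k : Fin (n+1), (Y k - Y (k + 1)) • kuhnVertex n k) i = x i := by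
    intro i
    have h1 : (∑ k : Fin (n+1), (Y k - Y (k + 1)) • kuhnVertex n k) i
        = ∑ k : Fin (n+1), (Y k - Y (k + 1)) * (if (i:ℕ) < (k:ℕ) then 1 else 0) := by
      rw [WithLp.ofLp_sum, Finset.sum_apply]
      rfl
    rw [h1]
    set Z : ℕ → ℝ := fun j => if (i:ℕ) < j then Y j else Y (i + 1) with hZ
    have h2 : ∀ k : Fin (n+1),
        (Y k - Y (k + 1)) * (if (i:ℕ) < (k:ℕ) then 1 else 0) = Z k - Z (k + 1) := by
      intro k
      rcases lt_trichotomy (i:ℕ) (k:ℕ) with h | h | h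
      · simp only [hZ, if_pos h, if_pos (Nat.lt_succ_of_lt h), mul_one]
      · simp only [hZ, if_neg (by omega : ¬ (i:ℕ) < (k:ℕ)),
          if_pos (by omega : (i:ℕ) < (k:ℕ) + 1), mul_zero, h, sub_self]
        simp
      · simp only [hZ, if_neg (by omega : ¬ (i:ℕ) < (k:ℕ)),
          if_neg (by omega : ¬ (i:ℕ) < (k:ℕ) + 1), mul_zero, sub_self]
    rw [Finset.sum_congr rfl (fun k _ => h2 k)]
    rw [Fin.sum_univ_eq_sum_range (fun j => Z j - Z (j + 1)) (n+1),
      Finset.sum_range_sub' Z (n+1)]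
    have hZ0 : Z 0 = Y (i + 1) := by simp [hZ]
    have hZn : Z (n + 1) = 0 := by
      rw [hZ]; simp only [if_pos (by omega : (i:ℕ) < n + 1)]; exact hYtop
    rw [hZ0, hZn, sub_zero, hYi]
  have hxeq : x = ∑ k : Fin (n+1), (Y k - Y (k + 1)) • kuhnVertex n k := (WithLp.ofLp_injective 2 (funext key)).symm
  rw [hxeq]
  refine (convex_convexHull ℝ _).sum_mem (fun k _ => ?_) ?_
    (fun k _ => subset_convexHull ℝ _ ⟨k, rfl⟩)
  · have := hYanti k
    linarith
  · rw [Fin.sum_univ_eq_sum_range (fun j => Y j - Y (j + 1)) (n+1),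
      Finset.sum_range_sub' Y (n+1), hY0, hYtop, sub_zero]


lemma coord_sq_le {n : ℕ} (x y : EuclideanSpace ℝ (Fin n)) (i : Fin n) :
    (x i - y i) ^ 2 ≤ dist x y ^ 2 := by
  rw [EuclideanSpace.dist_eq, Real.sq_sqrt (by positivity)]
  have h := Finset.single_le_sum (f := fun j => dist (x j) (y j) ^ 2)
    (fun j _ => by positivity) (Finset.mem_univ i)
  calc (x i - y i) ^ 2 = dist (x i) (y i) ^ 2 := by rw [Real.dist_eq, sq_abs]
  _ ≤ _ := h

lemma coord_pair_sq_le {n : ℕ} (x y : EuclideanSpace ℝ (Fin n)) {i j : Fin n} (hij : i ≠ j) :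
    (x i - y i) ^ 2 + (x j - y j) ^ 2 ≤ dist x y ^ 2 := by
  rw [EuclideanSpace.dist_eq, Real.sq_sqrt (by positivity)]
  have h1 : ∑ k ∈ ({i, j} : Finset (Fin n)), dist (x k) (y k) ^ 2
      ≤ ∑ k, dist (x k) (y k) ^ 2 :=
    Finset.sum_le_sum_of_subset_of_nonneg (Finset.subset_univ _) (fun k _ _ => by positivity)
  rw [Finset.sum_pair hij] at h1
  simpa [Real.dist_eq, sq_abs] using h1

lemma mem_ball_of_sq_sum {n : ℕ} (c : EuclideanSpace ℝ (Fin n)) (w : Fin n → ℝ) (r : ℝ)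
    (hr : 0 ≤ r) (h : ∑ j, w j ^ 2 ≤ r ^ 2) :
    ((WithLp.equiv 2 (Fin n → ℝ)).symm fun j => c j + w j) ∈ closedBall c r := by
  rw [mem_closedBall, EuclideanSpace.dist_eq]
  have : ∀ j : Fin n, dist (((WithLp.equiv 2 (Fin n → ℝ)).symm fun j => c j + w j) j) (c j) ^ 2
      = w j ^ 2 := by
    intro j
    rw [Real.dist_eq]
    have : ((WithLp.equiv 2 (Fin n → ℝ)).symm fun j => c j + w j) j = c j + w j := rfl
    rw [this, sq_abs]
    ring
  rw [Finset.sum_congr rfl (fun j _ => this j)]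
  calc Real.sqrt (∑ j, w j ^ 2) ≤ Real.sqrt (r ^ 2) := Real.sqrt_le_sqrt h
  _ = r := Real.sqrt_sq hr

lemma incenter_ball_subset (n : ℕ) (hn : 1 ≤ n) :
    closedBall ((WithLp.equiv 2 (Fin n → ℝ)).symm fun i =>
        (1 / (2 + ((n:ℝ) - 1) * Real.sqrt 2)) * (1 + ((n:ℝ) - 1 - (i:ℕ)) * Real.sqrt 2))
      (1 / (2 + ((n:ℝ) - 1) * Real.sqrt 2)) ⊆ Kset n := by
  set s2 : ℝ := Real.sqrt 2 with hs2
  have hs2pos : 0 < s2 := Real.sqrt_pos.mpr (by norm_num)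
  have hs2sq : s2 ^ 2 = 2 := Real.sq_sqrt (by norm_num)
  have hn1 : (0:ℝ) ≤ (n:ℝ) - 1 := by
    have : (1:ℝ) ≤ (n:ℝ) := by exact_mod_cast hn
    linarith
  set r : ℝ := 1 / (2 + ((n:ℝ) - 1) * s2) with hr
  have hd : 0 < 2 + ((n:ℝ) - 1) * s2 := by positivity
  have hrpos : 0 < r := by positivity
  have hreq : r * (2 + ((n:ℝ) - 1) * s2) = 1 := by
    rw [hr, one_div, inv_mul_cancel₀ hd.ne']
  set c : EuclideanSpace ℝ (Fin n) := (WithLp.equiv 2 (Fin n → ℝ)).symm fun i =>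
      r * (1 + ((n:ℝ) - 1 - (i:ℕ)) * s2) with hc
  have hcapp : ∀ i : Fin n, c i = r * (1 + ((n:ℝ) - 1 - (i:ℕ)) * s2) := fun i => rfl
  intro y hy
  rw [mem_closedBall] at hy
  have hcast : ∀ i : Fin n, ((i:ℕ):ℝ) ≤ (n:ℝ) - 1 := by
    intro i
    have h := i.isLt
    have : ((i:ℕ):ℝ) + 1 ≤ (n:ℝ) := by exact_mod_cast h
    linarith
  have hdy : dist y c ^ 2 ≤ r ^ 2 := pow_le_pow_left₀ dist_nonneg hy 2
  have hcoord : ∀ i : Fin n, (y i - c i) ^ 2 ≤ r ^ 2 :=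
    fun i => le_trans (coord_sq_le y c i) hdy
  refine ⟨fun i => ⟨?_, ?_⟩, fun i j hij => ?_⟩
  · -- 0 ≤ y i
    have h3 : (0:ℝ) ≤ (n:ℝ) - 1 - ((i:ℕ):ℝ) := by linarith [hcast i]
    have hd1 := (abs_le_of_sq_le_sq' (hcoord i) hrpos.le).1
    have heq : c i - r = r * (((n:ℝ) - 1 - ((i:ℕ):ℝ)) * s2) := by rw [hcapp i]; ring
    have hge : 0 ≤ r * (((n:ℝ) - 1 - ((i:ℕ):ℝ)) * s2) :=
      mul_nonneg hrpos.le (mul_nonneg h3 hs2pos.le)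
    linarith
  · -- y i ≤ 1
    have hd2 := (abs_le_of_sq_le_sq' (hcoord i) hrpos.le).2
    have heq : c i + r = 1 - r * (((i:ℕ):ℝ) * s2) := by
      rw [hcapp i]; linear_combination hreq
    have hge : 0 ≤ r * (((i:ℕ):ℝ) * s2) :=
      mul_nonneg hrpos.le (mul_nonneg (Nat.cast_nonneg _) hs2pos.le)
    linarith
  · rcases eq_or_lt_of_le hij with rfl | hlt
    · exact le_refl _
    · have hne : i ≠ j := ne_of_lt hlt
      have hp := coord_pair_sq_le y c hne
      have hij' : ((i:ℕ):ℝ) + 1 ≤ ((j:ℕ):ℝ) := by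
        have : (i:ℕ) + 1 ≤ (j:ℕ) := hlt
        exact_mod_cast this
      have hci : c i - c j = r * (((j:ℕ):ℝ) - ((i:ℕ):ℝ)) * s2 := by
        rw [hcapp i, hcapp j]; ring
      have hs2r : (s2 * r) ^ 2 = 2 * r ^ 2 := by rw [mul_pow, hs2sq]
      have h8 : (y i - c i - (y j - c j)) ^ 2 ≤ (s2 * r) ^ 2 := by
        nlinarith [sq_nonneg ((y i - c i) + (y j - c j)), hp, hdy, hs2r]
      have h10 : -(s2 * r) ≤ y i - c i - (y j - c j) :=
        (abs_le_of_sq_le_sq' h8 (mul_pos hs2pos hrpos).le).1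
      have h11 : 0 ≤ r * s2 * (((j:ℕ):ℝ) - ((i:ℕ):ℝ) - 1) :=
        mul_nonneg (mul_pos hrpos hs2pos).le (by linarith)
      have h12 : c i - c j - s2 * r = r * s2 * (((j:ℕ):ℝ) - ((i:ℕ):ℝ) - 1) := by
        rw [hci]; ring
      linarith [h10, h11, h12]

lemma kuhn_upper (n : ℕ) (hn : 1 ≤ n) (r : ℝ) (hr : 0 ≤ r)
    (c : EuclideanSpace ℝ (Fin n)) (hc : closedBall c r ⊆ kuhnSimplex n) :
    r * (2 + ((n:ℝ) - 1) * Real.sqrt 2) ≤ 1 := by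
  set s2 : ℝ := Real.sqrt 2 with hs2
  have hs2pos : 0 < s2 := Real.sqrt_pos.mpr (by norm_num)
  have hs2sq : s2 ^ 2 = 2 := Real.sq_sqrt (by norm_num)
  have hK : closedBall c r ⊆ Kset n := hc.trans (kuhn_subset_Kset n)
  have h0n : 0 < n := hn
  set i0 : Fin n := ⟨0, h0n⟩ with hi0
  set il : Fin n := ⟨n - 1, by omega⟩ with hil
  -- first constraint : c i0 + r ≤ 1
  have h1 : c i0 + r ≤ 1 := by
    have hmem := mem_ball_of_sq_sum c (fun j => if j = i0 then r else 0) r hr ?_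
    · have := (hK hmem).1 i0
      simpa using this.2
    · have : ∀ j : Fin n, (if j = i0 then r else 0) ^ 2 = if j = i0 then r ^ 2 else 0 := by
        intro j; split <;> simp
      rw [Finset.sum_congr rfl (fun j _ => this j), Finset.sum_ite_eq' Finset.univ i0]
      simp
  -- second constraint : r ≤ c il
  have h2 : r ≤ c il := by
    have hmem := mem_ball_of_sq_sum c (fun j => if j = il then -r else 0) r hr ?_
    · have h := ((hK hmem).1 il).1
      replace h : (0:ℝ) ≤ c il + (if il = il then -r else 0) := h
      rw [if_pos rfl] at h
      linarith
    · have : ∀ j : Fin n, (if j = il then -r else 0) ^ 2 = if j = il then r ^ 2 else 0 := by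
        intro j; split <;> simp [neg_pow]
      rw [Finset.sum_congr rfl (fun j _ => this j), Finset.sum_ite_eq' Finset.univ il]
      simp
  -- middle constraints
  have h3 : ∀ t : ℕ, ∀ ht : t + 1 < n, s2 * r ≤ c ⟨t, by omega⟩ - c ⟨t + 1, by omega⟩ := by
    intro t ht
    set a : Fin n := ⟨t, by omega⟩ with ha
    set b : Fin n := ⟨t + 1, ht⟩ with hb
    have hab : a ≠ b := by simp [ha, hb, Fin.ext_iff]
    have hba : b ≠ a := Ne.symm hab
    have hmem := mem_ball_of_sq_sum c
      (fun j => if j = a then -(r / s2) else if j = b then r / s2 else 0) r hr ?_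
    · have h := (hK hmem).2 a b (by simp [ha, hb, Fin.le_def])
      replace h : c b + (if b = a then -(r / s2) else if b = b then r / s2 else 0)
          ≤ c a + (if a = a then -(r / s2) else if a = b then r / s2 else 0) := h
      rw [if_neg hba, if_pos rfl, if_pos rfl] at h
      have h2s : 2 * (r / s2) = s2 * r := by
        field_simp
        linear_combination (-r) * hs2sq
      linarith
    · have hptw : ∀ j : Fin n,
          (if j = a then -(r / s2) else if j = b then r / s2 else 0) ^ 2
          = (if j = a then (r / s2) ^ 2 else 0) + (if j = b then (r / s2) ^ 2 else 0) := by
        intro j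
        by_cases hja : j = a
        · subst hja
          rw [if_pos rfl, if_pos rfl, if_neg hab, add_zero]
          ring
        · by_cases hjb : j = b
          · subst hjb
            rw [if_neg hja, if_pos rfl, if_neg hja, if_pos rfl, zero_add]
          · rw [if_neg hja, if_neg hjb, if_neg hja, if_neg hjb, add_zero]
            norm_num
      rw [Finset.sum_congr rfl (fun j _ => hptw j), Finset.sum_add_distrib,
        Finset.sum_ite_eq' Finset.univ a, Finset.sum_ite_eq' Finset.univ b]
      simp only [Finset.mem_univ, if_pos]
      have : (r / s2) ^ 2 + (r / s2) ^ 2 = r ^ 2 := by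
        rw [div_pow, hs2sq]; ring
      linarith
  -- telescoping
  have h4 : ((n:ℝ) - 1) * (s2 * r) ≤ c i0 - c il := by
    set C : ℕ → ℝ := fun t => if h : t < n then c ⟨t, h⟩ else 0 with hC
    have htel : ∑ t ∈ Finset.range (n - 1), (C t - C (t + 1)) = C 0 - C (n - 1) :=
      Finset.sum_range_sub' C (n - 1)
    have hterm : ∀ t ∈ Finset.range (n - 1), s2 * r ≤ C t - C (t + 1) := by
      intro t ht
      rw [Finset.mem_range] at ht
      have ht' : t + 1 < n := by omega
      have e1 : C t = c ⟨t, by omega⟩ := dif_pos (by omega)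
      have e2 : C (t + 1) = c ⟨t + 1, by omega⟩ := dif_pos (by omega)
      rw [e1, e2]
      exact h3 t ht'
    have hsum := Finset.card_nsmul_le_sum (Finset.range (n - 1)) _ (s2 * r) hterm
    rw [htel, Finset.card_range, nsmul_eq_mul] at hsum
    have e0 : C 0 = c i0 := dif_pos h0n
    have el : C (n - 1) = c il := dif_pos (by omega)
    have hcard : ((n - 1 : ℕ) : ℝ) = (n:ℝ) - 1 := by
      rw [Nat.cast_sub hn]; norm_num
    rw [e0, el, hcard] at hsum
    exact hsum
  nlinarith [h1, h2, h4]

/-- The inradius diameter of the Kuhn simplex satisfies `1/r(T̂) = 1 + (n−1)/√2`. -/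
theorem kuhn_inDiam (n : ℕ) (hn : 1 ≤ n) :
    1 / inDiam (kuhnSimplex n) = 1 + ((n : ℝ) - 1) / Real.sqrt 2 := by
  have hs2pos : 0 < Real.sqrt 2 := Real.sqrt_pos.mpr (by norm_num)
  have hs2sq : Real.sqrt 2 ^ 2 = 2 := Real.sq_sqrt (by norm_num)
  have hn1 : (0:ℝ) ≤ (n:ℝ) - 1 := by
    have : (1:ℝ) ≤ (n:ℝ) := by exact_mod_cast hn
    linarith
  have hdpos : 0 < 2 + ((n:ℝ) - 1) * Real.sqrt 2 := by
    have := mul_nonneg hn1 hs2pos.le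
    linarith
  have hmem : (1 / (2 + ((n:ℝ) - 1) * Real.sqrt 2)) ∈
      {r : ℝ | 0 ≤ r ∧ ∃ c, Metric.closedBall c r ⊆ kuhnSimplex n} :=
    ⟨by positivity, _, (incenter_ball_subset n hn).trans (Kset_subset_kuhn n)⟩
  have hub : ∀ x ∈ {r : ℝ | 0 ≤ r ∧ ∃ c, Metric.closedBall c r ⊆ kuhnSimplex n},
      x ≤ 1 / (2 + ((n:ℝ) - 1) * Real.sqrt 2) := by
    rintro x ⟨hx0, c, hc⟩
    rw [le_div_iff₀ hdpos]
    exact kuhn_upper n hn x hx0 c hc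
  have hkey : sSup {r : ℝ | 0 ≤ r ∧ ∃ c, Metric.closedBall c r ⊆ kuhnSimplex n}
      = 1 / (2 + ((n:ℝ) - 1) * Real.sqrt 2) :=
    le_antisymm (csSup_le ⟨_, hmem⟩ hub) (le_csSup ⟨_, hub⟩ hmem)
  rw [inDiam, hkey]
  field_simp
  ring_nf
  nlinarith [hs2sq, hs2pos]
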